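/- With c nonincreasing, nonnegative and u positive, suppose n̄ > 1 is the least index with G_{n̄} ≥ 0. Define δ₁ = min{c_{n̄−1} − U_{n̄−2}, u_{n̄−1}}, δ₂ = max{c_{n̄} − U_{n̄−1}, 0}, x̄ = x^{(n̄−2)} + δ₁ e_{n̄−1} and x̃ = x^{(n̄−1)} + δ₂ e_{n̄}. Then min{f(x̄), f(x̃)} = min{ f(x) : x^{(n̄−2)} ≤ x ≤ x^{(n̄)} }. -/

import Mathlib

open Finset

noncomputable def Usum (u : ℕ → ℝ) (k : ℕ) : ℝ := ∑ i ∈ Finset.Icc 1 k, u i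

noncomputable def fobj (n : ℕ) (c x : ℕ → ℝ) : ℝ :=
  (1/2) * (∑ i ∈ Finset.Icc 1 n, x i)^2 - ∑ i ∈ Finset.Icc 1 n, c i * x i

noncomputable def xk (u : ℕ → ℝ) (k : ℕ) : ℕ → ℝ := fun i => if i ≤ k then u i else 0

noncomputable def Gseq (u c : ℕ → ℝ) (k : ℕ) : ℝ := Usum u (k-1) + u k / 2 - c k

lemma sum_split (x : ℕ → ℝ) (n m : ℕ) (h : m + 2 ≤ n) :
    ∑ i ∈ Icc 1 n, x i
      = (∑ i ∈ Icc 1 m, x i) + x (m+1) + x (m+2) + ∑ i ∈ Ioc (m+2) n, x i := by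
  have h0 : (Icc 1 n : Finset ℕ) = Ioc 0 n := by rw [← Finset.Icc_add_one_left_eq_Ioc]; rfl
  have h1 : (Icc 1 m : Finset ℕ) = Ioc 0 m := by rw [← Finset.Icc_add_one_left_eq_Ioc]; rfl
  rw [h0, h1]
  rw [← Finset.sum_Ioc_consecutive x (Nat.zero_le (m+2)) (by omega : m+2 ≤ n)]
  rw [← Finset.sum_Ioc_consecutive x (Nat.zero_le (m+1)) (by omega : m+1 ≤ m+2)]
  rw [← Finset.sum_Ioc_consecutive x (Nat.zero_le m) (by omega : m ≤ m+1)]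
  have e1 : (Ioc m (m+1) : Finset ℕ) = {m+1} := by
    ext i; simp [Nat.lt_succ_iff]
  have e2 : (Ioc (m+1) (m+2) : Finset ℕ) = {m+2} := by
    ext i; simp [Nat.lt_succ_iff]
  rw [e1, e2, Finset.sum_singleton, Finset.sum_singleton]

lemma core (A B p q u1 s t : ℝ) (hpq : q ≤ p)
    (hs' : s ≤ u1) (ht : 0 ≤ t) :
    min ((1/2)*(A + min (p - A) u1 + 0)^2 - B - p * min (p - A) u1 - q * 0)
        ((1/2)*(A + u1 + max (q - (A + u1)) 0)^2 - B - p * u1 - q * max (q - (A + u1)) 0)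
      ≤ (1/2)*(A + s + t)^2 - B - p * s - q * t := by
  rcases le_or_gt (s + t) u1 with hm | hm
  · refine le_trans (min_le_left _ _) ?_
    rcases le_total (p - A) u1 with h | h
    · rw [min_eq_left h]
      nlinarith [sq_nonneg (s + t - (p - A)), mul_nonneg ht (sub_nonneg.2 hpq)]
    · rw [min_eq_right h]
      nlinarith [mul_nonneg (sub_nonneg.2 hm) (sub_nonneg.2 h),
        mul_nonneg ht (sub_nonneg.2 hpq), sq_nonneg (u1 - (s+t))]
  · refine le_trans (min_le_right _ _) ?_
    rcases le_total (q - (A + u1)) 0 with h | h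
    · rw [max_eq_right h]
      nlinarith [mul_nonneg (sub_nonneg.2 hs') (sub_nonneg.2 hpq),
        mul_nonneg (le_of_lt (sub_pos.2 hm)) (neg_nonneg.2 h), sq_nonneg (s + t - u1)]
    · rw [max_eq_left h]
      nlinarith [sq_nonneg (A + s + t - q), mul_nonneg (sub_nonneg.2 hs') (sub_nonneg.2 hpq)]

lemma fobj_eval (n m : ℕ) (h : m + 2 ≤ n) (c u x : ℕ → ℝ)
    (hx : ∀ i, 1 ≤ i → i ≤ m → x i = u i)
    (hx0 : ∀ i, m + 2 < i → i ≤ n → x i = 0) :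
    fobj n c x = (1/2)*(Usum u m + x (m+1) + x (m+2))^2
      - (∑ i ∈ Icc 1 m, c i * u i) - c (m+1) * x (m+1) - c (m+2) * x (m+2) := by
  unfold fobj Usum
  rw [sum_split x n m h, sum_split (fun i => c i * x i) n m h]
  have e1 : ∑ i ∈ Icc 1 m, x i = ∑ i ∈ Icc 1 m, u i := by
    refine Finset.sum_congr rfl fun i hi => ?_
    simp only [Finset.mem_Icc] at hi
    exact hx i hi.1 hi.2
  have e2 : ∑ i ∈ Icc 1 m, c i * x i = ∑ i ∈ Icc 1 m, c i * u i := by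
    refine Finset.sum_congr rfl fun i hi => ?_
    simp only [Finset.mem_Icc] at hi
    rw [hx i hi.1 hi.2]
  have e3 : ∑ i ∈ Ioc (m+2) n, x i = 0 := by
    refine Finset.sum_eq_zero fun i hi => ?_
    simp only [Finset.mem_Ioc] at hi
    exact hx0 i hi.1 hi.2
  have e4 : ∑ i ∈ Ioc (m+2) n, c i * x i = 0 := by
    refine Finset.sum_eq_zero fun i hi => ?_
    simp only [Finset.mem_Ioc] at hi
    rw [hx0 i hi.1 hi.2, mul_zero]
  rw [e1, e2, e3, e4]
  ring

theorem stmt6 (n : ℕ) (hn : 0 < n) (u c : ℕ → ℝ)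
    (hu : ∀ i, 1 ≤ i → i ≤ n → 0 < u i)
    (hc : ∀ i j, 1 ≤ i → i ≤ j → j ≤ n → c j ≤ c i)
    (hc0 : 0 ≤ c n)
    (nb : ℕ) (hnb1 : 1 < nb) (hnbn : nb ≤ n)
    (hGnb : 0 ≤ Gseq u c nb)
    (hleast : ∀ k, 1 ≤ k → k < nb → Gseq u c k < 0) :
    let δ1 : ℝ := min (c (nb-1) - Usum u (nb-2)) (u (nb-1))
    let δ2 : ℝ := max (c nb - Usum u (nb-1)) 0
    let xbar : ℕ → ℝ := fun i => xk u (nb-2) i + if i = nb-1 then δ1 else 0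
    let xtil : ℕ → ℝ := fun i => xk u (nb-1) i + if i = nb then δ2 else 0
    IsLeast ((fobj n c) ''
      {x | ∀ i, 1 ≤ i → i ≤ n → xk u (nb-2) i ≤ x i ∧ x i ≤ xk u nb i})
      (min (fobj n c xbar) (fobj n c xtil)) := by
  intro δ1 δ2 xbar xtil
  obtain ⟨m, rfl⟩ : ∃ m, nb = m + 2 := ⟨nb - 2, by omega⟩
  have hn1 : m + 2 - 1 = m + 1 := by omega
  have hn2 : m + 2 - 2 = m := by omega
  have hpq : c (m+2) ≤ c (m+1) := hc (m+1) (m+2) (by omega) (by omega) hnbn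
  have hu1 : 0 < u (m+1) := hu _ (by omega) (by omega)
  have hu2 : 0 < u (m+2) := hu _ (by omega) hnbn
  have hA : Usum u (m+1) = Usum u m + u (m+1) := by
    unfold Usum
    exact Finset.sum_Icc_succ_top (by omega) u
  have hG1 : Usum u m + u (m+1)/2 - c (m+1) < 0 := by
    have := hleast (m+1) (by omega) (by omega)
    unfold Gseq at this
    simpa using this
  have hG2 : 0 ≤ Usum u (m+1) + u (m+2)/2 - c (m+2) := by
    unfold Gseq at hGnb
    rw [hn1] at hGnb
    exact hGnb
  have hδ1a : 0 ≤ δ1 := by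
    simp only [δ1, hn1, hn2]
    exact le_min (by linarith) hu1.le
  have hδ1b : δ1 ≤ u (m+1) := by
    simp only [δ1, hn1]
    exact min_le_right _ _
  have hδ2a : 0 ≤ δ2 := le_max_right _ _
  have hδ2b : δ2 ≤ u (m+2) := by
    simp only [δ2, hn1]
    exact max_le (by linarith) hu2.le
  -- monotonicity of xk
  have hxk : ∀ i, 1 ≤ i → i ≤ n → ∀ k l : ℕ, k ≤ l → xk u k i ≤ xk u l i := by
    intro i h1 h2 k l hkl
    unfold xk
    split_ifs with ha hb hb
    · exact le_refl _
    · omega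
    · exact (hu i h1 h2).le
    · exact le_refl _
  -- feasibility of xbar
  have hxbar_mem : xbar ∈ {x : ℕ → ℝ | ∀ i, 1 ≤ i → i ≤ n →
      xk u (m+2-2) i ≤ x i ∧ x i ≤ xk u (m+2) i} := by
    intro i h1 h2
    simp only [xbar, hn1, hn2]
    by_cases hi : i = m + 1
    · subst hi
      have e0 : xk u m (m+1) = 0 := by simp [xk]
      have e1 : xk u (m+2) (m+1) = u (m+1) := by simp [xk]
      rw [e0, e1]
      constructor
      · simpa using hδ1a
      · simpa using hδ1b
    · rw [if_neg hi, add_zero]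
      exact ⟨le_refl _, hxk i h1 h2 m (m+2) (by omega)⟩
  -- feasibility of xtil
  have hxtil_mem : xtil ∈ {x : ℕ → ℝ | ∀ i, 1 ≤ i → i ≤ n →
      xk u (m+2-2) i ≤ x i ∧ x i ≤ xk u (m+2) i} := by
    intro i h1 h2
    simp only [xtil, hn1, hn2]
    by_cases hi : i = m + 2
    · subst hi
      have e0 : xk u (m+1) (m+2) = 0 := by simp [xk]
      have e1 : xk u m (m+2) = 0 := by simp [xk]
      have e2 : xk u (m+2) (m+2) = u (m+2) := by simp [xk]
      rw [e0, e1, e2, if_pos rfl]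
      constructor
      · simpa using hδ2a
      · simpa using hδ2b
    · rw [if_neg hi, add_zero]
      exact ⟨hxk i h1 h2 m (m+1) (by omega), hxk i h1 h2 (m+1) (m+2) (by omega)⟩
  -- evaluation of fobj at xbar
  have Exbar : fobj n c xbar = (1/2)*(Usum u m + δ1 + 0)^2
      - (∑ i ∈ Icc 1 m, c i * u i) - c (m+1) * δ1 - c (m+2) * 0 := by
    have h1 : xbar (m+1) = δ1 := by
      simp only [xbar, hn1, hn2, xk]
      rw [if_neg (show ¬ m+1 ≤ m by omega)]
      simp
    have h2 : xbar (m+2) = 0 := by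
      simp only [xbar, hn1, hn2, xk]
      rw [if_neg (by omega), if_neg (by omega)]; ring
    rw [fobj_eval n m hnbn c u xbar
      (fun i hi1 hi2 => by
        simp only [xbar, hn1, hn2, xk]
        rw [if_pos hi2, if_neg (by omega)]; ring)
      (fun i hi1 hi2 => by
        simp only [xbar, hn1, hn2, xk]
        rw [if_neg (by omega), if_neg (by omega)]; ring), h1, h2]
  -- evaluation of fobj at xtil
  have Extil : fobj n c xtil = (1/2)*(Usum u m + u (m+1) + δ2)^2
      - (∑ i ∈ Icc 1 m, c i * u i) - c (m+1) * u (m+1) - c (m+2) * δ2 := by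
    have h1 : xtil (m+1) = u (m+1) := by
      simp only [xtil, hn1, xk]
      rw [if_pos (le_refl _), if_neg (by omega)]; ring
    have h2 : xtil (m+2) = δ2 := by
      simp only [xtil, hn1, xk]
      rw [if_neg (show ¬ m+2 ≤ m+1 by omega)]
      simp
    rw [fobj_eval n m hnbn c u xtil
      (fun i hi1 hi2 => by
        simp only [xtil, hn1, xk]
        rw [if_pos (by omega), if_neg (by omega)]; ring)
      (fun i hi1 hi2 => by
        simp only [xtil, hn1, xk]
        rw [if_neg (by omega), if_neg (by omega)]; ring), h1, h2]
  constructor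
  · rcases min_cases (fobj n c xbar) (fobj n c xtil) with ⟨he, _⟩ | ⟨he, _⟩
    · rw [he]; exact ⟨xbar, hxbar_mem, rfl⟩
    · rw [he]; exact ⟨xtil, hxtil_mem, rfl⟩
  · rintro y ⟨x, hx, rfl⟩
    have hxu : ∀ i, 1 ≤ i → i ≤ m → x i = u i := by
      intro i hi1 hi2
      obtain ⟨hl, hr⟩ := hx i hi1 (by omega)
      have e1 : xk u (m+2-2) i = u i := by simp only [hn2, xk]; rw [if_pos hi2]
      have e2 : xk u (m+2) i = u i := by simp only [xk]; rw [if_pos (by omega)]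
      rw [e1] at hl; rw [e2] at hr
      linarith
    have hx0 : ∀ i, m + 2 < i → i ≤ n → x i = 0 := by
      intro i hi1 hi2
      obtain ⟨hl, hr⟩ := hx i (by omega) hi2
      have e1 : xk u (m+2-2) i = 0 := by simp only [hn2, xk]; rw [if_neg (by omega)]
      have e2 : xk u (m+2) i = 0 := by simp only [xk]; rw [if_neg (by omega)]
      rw [e1] at hl; rw [e2] at hr
      linarith
    have hs0 : 0 ≤ x (m+1) := by
      have := (hx (m+1) (by omega) (by omega)).1
      simpa [hn2, xk, Nat.lt_irrefl] using this.trans_eq' (by simp [hn2, xk])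
    have hs' : x (m+1) ≤ u (m+1) := by
      have := (hx (m+1) (by omega) (by omega)).2
      have e : xk u (m+2) (m+1) = u (m+1) := by simp [xk]
      rwa [e] at this
    have ht0 : 0 ≤ x (m+2) := by
      have := (hx (m+2) (by omega) hnbn).1
      have e : xk u (m+2-2) (m+2) = 0 := by simp only [hn2, xk]; rw [if_neg (by omega)]
      rwa [e] at this
    rw [fobj_eval n m hnbn c u x hxu hx0, Exbar, Extil]
    have hδ1e : δ1 = min (c (m+1) - Usum u m) (u (m+1)) := by simp only [δ1, hn1, hn2]
    have hδ2e : δ2 = max (c (m+2) - (Usum u m + u (m+1))) 0 := by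
      simp only [δ2, hn1, hA]
    rw [hδ1e, hδ2e]
    exact core (Usum u m) (∑ i ∈ Icc 1 m, c i * u i) (c (m+1)) (c (m+2))
      (u (m+1)) (x (m+1)) (x (m+2)) hpq hs' ht0
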